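/- Let X and Y be finite nonempty index sets, m : X → ℕ⁺ and n : Y → ℕ⁺, and consider the multi-matrix algebras 𝒜 = ⊕_{x∈X} M_{m_x}(ℂ) and ℬ = ⊕_{y∈Y} M_{n_y}(ℂ). Let F : ℬ → 𝒜 be a unital linear map each of whose components F_{xy} : M_{n_y}(ℂ) → M_{m_x}(ℂ), F_{xy}(B) := (F(ι_y B))_x (where ι_y B is the element of ℬ equal to B in the y-th block and 0 elsewhere), is completely positive. Let ω = Σ_{x} p_x tr(ρ_x ·) be a faithful state on 𝒜 (p_x > 0 a probability distribution, each ρ_x a positive definite density matrix) and suppose the pulled-back state ω∘F equals Σ_{y} q_y tr(σ_y ·) with q_y > 0 and each σ_y a positive definite density matrix. Then the following are equivalent: (a) F_{xy}(σ_y B)ρ_x = ρ_x F_{xy}(B σ_y) for all B ∈ M_{n_y}(ℂ) and all x ∈ X, y ∈ Y; (b) F_{xy}(σ_y^{it} B σ_y^{-it}) = ρ_x^{it} F_{xy}(B) ρ_x^{-it} for all B, all x, y, and all t ∈ ℝ (i.e., F intertwines the modular groups of ω∘F and ω). -/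

import Mathlib

open Matrix ComplexOrder

/-- The `k`-th amplification `id_{M_k(ℂ)} ⊗ Φ` of a map `Φ` between matrix algebras. -/
def amplify {n m : Type*} (Φ : Matrix n n ℂ → Matrix m m ℂ) (k : ℕ)
    (M : Matrix (Fin k × n) (Fin k × n) ℂ) : Matrix (Fin k × m) (Fin k × m) ℂ :=
  Matrix.of fun p q => Φ (Matrix.of fun a b => M (p.1, a) (q.1, b)) p.2 q.2

/-- Complete positivity: all amplifications preserve positive semidefiniteness. -/
def IsCP {n m : Type*} [Fintype n] [Fintype m] (Φ : Matrix n n ℂ → Matrix m m ℂ) : Prop :=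
  ∀ (k : ℕ) (M : Matrix (Fin k × n) (Fin k × n) ℂ), M.PosSemidef → (amplify Φ k M).PosSemidef

/-- `ρ^{it} := exp(i t · log ρ)` for a positive definite matrix `ρ`, where `log` is given
by the functional calculus for Hermitian matrices. -/
noncomputable def imagPow {d : Type*} [Fintype d] [DecidableEq d]
    {ρ : Matrix d d ℂ} (hρ : ρ.PosDef) (t : ℝ) : Matrix d d ℂ :=
  NormedSpace.exp ((Complex.I * (t : ℂ)) • (hρ.isHermitian.cfc Real.log))

lemma exp_param_inj {a b : ℝ}
    (h : ∀ t : ℝ, Complex.exp (Complex.I * t * a) = Complex.exp (Complex.I * t * b)) : a = b := by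
  by_contra hab
  have hsub : a - b ≠ 0 := sub_ne_zero.mpr hab
  have h1 := h (Real.pi / (a - b))
  have h2 : Complex.exp (Complex.I * ↑(Real.pi / (a - b)) * a - Complex.I * ↑(Real.pi / (a - b)) * b) = 1 := by
    rw [Complex.exp_sub, h1, div_self (Complex.exp_ne_zero _)]
  have hsub' : ((a : ℂ) - b) ≠ 0 := by
    rw [← Complex.ofReal_sub]
    exact Complex.ofReal_ne_zero.mpr hsub
  have h3 : Complex.I * ↑(Real.pi / (a - b)) * a - Complex.I * ↑(Real.pi / (a - b)) * b
      = Real.pi * Complex.I := by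
    push_cast
    field_simp
  rw [h3, Complex.exp_pi_mul_I] at h2
  norm_num at h2

lemma imagPow_eq {d : Type*} [Fintype d] [DecidableEq d]
    {ρ : Matrix d d ℂ} (hρ : ρ.PosDef) (t : ℝ) :
    imagPow hρ t =
      (hρ.isHermitian.eigenvectorUnitary : Matrix d d ℂ) *
        Matrix.diagonal (fun i => Complex.exp (Complex.I * t * Real.log (hρ.isHermitian.eigenvalues i))) *
        star (hρ.isHermitian.eigenvectorUnitary : Matrix d d ℂ) := by
  classical
  set U := hρ.isHermitian.eigenvectorUnitary with hUdef
  set v : d → ℂ := RCLike.ofReal ∘ Real.log ∘ hρ.isHermitian.eigenvalues with hv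
  let u : (Matrix d d ℂ)ˣ := Unitary.toUnits U
  have hu : (u : Matrix d d ℂ) = U := rfl
  have hu' : ((u⁻¹ : (Matrix d d ℂ)ˣ) : Matrix d d ℂ) = star (U : Matrix d d ℂ) := rfl
  have step1 : (Complex.I * (t:ℂ)) • ((U : Matrix d d ℂ) * Matrix.diagonal v * star (U : Matrix d d ℂ))
      = (u : Matrix d d ℂ) * ((Complex.I * (t:ℂ)) • Matrix.diagonal v) * ((u⁻¹ : (Matrix d d ℂ)ˣ) : Matrix d d ℂ) := by
    rw [hu, hu', mul_smul_comm, smul_mul_assoc]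
  unfold imagPow
  rw [Matrix.IsHermitian.cfc, Unitary.conjStarAlgAut_apply, ← hv, step1, Matrix.exp_units_conj u]
  rw [hu, hu']
  congr 1
  congr 1
  rw [← Matrix.diagonal_smul, Matrix.exp_diagonal, Pi.exp_def]
  congr 1
  funext i
  rw [← Complex.exp_eq_exp_ℂ]
  simp [hv, RCLike.ofReal]

lemma key_iff {a b : Type*} [Fintype a] [DecidableEq a] [Fintype b] [DecidableEq b]
    (g : Matrix b b ℂ →ₗ[ℂ] Matrix a a ℂ)
    {ρ : Matrix a a ℂ} {σ : Matrix b b ℂ} (hρ : ρ.PosDef) (hσ : σ.PosDef) :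
    (∀ B, g (σ * B) * ρ = ρ * g (B * σ)) ↔
    (∀ B (t : ℝ), g (imagPow hσ t * B * imagPow hσ (-t))
        = imagPow hρ t * g B * imagPow hρ (-t)) := by
  classical
  set U : Matrix a a ℂ := (hρ.isHermitian.eigenvectorUnitary : Matrix a a ℂ) with hUdef
  set V : Matrix b b ℂ := (hσ.isHermitian.eigenvectorUnitary : Matrix b b ℂ) with hVdef
  set lam := hρ.isHermitian.eigenvalues with hlamdef
  set mu := hσ.isHermitian.eigenvalues with hmudef
  have hU1 : star U * U = 1 := Matrix.UnitaryGroup.star_mul_self _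
  have hV1 : star V * V = 1 := Matrix.UnitaryGroup.star_mul_self _
  have hU2 : U * star U = 1 := (hρ.isHermitian.eigenvectorUnitary).2.2
  have hV2 : V * star V = 1 := (hσ.isHermitian.eigenvectorUnitary).2.2
  have hlam0 : ∀ i, 0 < lam i := fun i => hρ.eigenvalues_pos i
  have hmu0 : ∀ j, 0 < mu j := fun j => hσ.eigenvalues_pos j
  set Dl : Matrix a a ℂ := Matrix.diagonal (fun i => (lam i : ℂ)) with hDl
  set Dm : Matrix b b ℂ := Matrix.diagonal (fun j => (mu j : ℂ)) with hDm
  have hofR : (RCLike.ofReal ∘ lam : a → ℂ) = fun i => (lam i : ℂ) := rfl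
  have hofR' : (RCLike.ofReal ∘ mu : b → ℂ) = fun j => (mu j : ℂ) := rfl
  have hρspec : ρ = U * Dl * star U := by
    have h := hρ.isHermitian.spectral_theorem
    rw [hDl, ← hofR]
    exact h
  have hσspec : σ = V * Dm * star V := by
    have h := hσ.isHermitian.spectral_theorem
    rw [hDm, ← hofR']
    exact h
  -- diagonal-stdBasis lemmas
  have dmulL : ∀ {c : b → ℂ} (j j' : b),
      Matrix.diagonal c * Matrix.single j j' (1:ℂ) = c j • Matrix.single j j' 1 := by
    intro c j j'
    ext k l
    simp only [Matrix.diagonal_mul, Matrix.smul_apply, Matrix.single, Matrix.of_apply,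
      smul_eq_mul, mul_ite, mul_zero, mul_one]
    by_cases h1 : j = k
    · subst h1; rfl
    · simp [h1]
  have dmulR : ∀ {c : b → ℂ} (j j' : b),
      Matrix.single j j' (1:ℂ) * Matrix.diagonal c = c j' • Matrix.single j j' 1 := by
    intro c j j'
    ext k l
    simp only [Matrix.mul_diagonal, Matrix.smul_apply, Matrix.single, Matrix.of_apply,
      smul_eq_mul, ite_mul, zero_mul, one_mul, mul_ite, mul_zero, mul_one]
    by_cases h1 : j' = l
    · subst h1; rfl
    · simp [h1]
  have stdsmul : ∀ (r : ℂ) (j j' : b), Matrix.single j j' r = r • Matrix.single j j' (1:ℂ) := by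
    intro r j j'
    rw [Matrix.smul_single, smul_eq_mul, mul_one]
  -- conjugation helpers
  have conjU_cancel : ∀ M : Matrix a a ℂ, U * (star U * M * U) * star U = M := by
    intro M
    calc U * (star U * M * U) * star U = (U * star U) * M * (U * star U) := by noncomm_ring
      _ = M := by rw [hU2, one_mul, mul_one]
  have conjU_inj : ∀ M₁ M₂ : Matrix a a ℂ,
      star U * M₁ * U = star U * M₂ * U → M₁ = M₂ := by
    intro M₁ M₂ h
    have h2 := congrArg (fun Z => U * Z * star U) h
    simpa only [conjU_cancel] using h2
  have cancelV : ∀ B : Matrix b b ℂ, V * (star V * B * V) * star V = B := by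
    intro B
    calc V * (star V * B * V) * star V = (V * star V) * B * (V * star V) := by noncomm_ring
      _ = B := by rw [hV2, one_mul, mul_one]
  -- expansion over basis
  have expand : ∀ C : Matrix b b ℂ, V * C * star V
      = ∑ j : b, ∑ j' : b, C j j' • (V * Matrix.single j j' 1 * star V) := by
    intro C
    have e1 : ∀ j j' : b, V * Matrix.single j j' (C j j') * star V
        = C j j' • (V * Matrix.single j j' 1 * star V) := by
      intro j j'
      rw [stdsmul (C j j'), mul_smul_comm, smul_mul_assoc]
    calc V * C * star V
        = V * (∑ j : b, ∑ j' : b, Matrix.single j j' (C j j')) * star V := by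
          rw [← Matrix.matrix_eq_sum_single]
      _ = ∑ j : b, ∑ j' : b, V * Matrix.single j j' (C j j') * star V := by
          simp only [Matrix.mul_sum, Matrix.sum_mul]
      _ = ∑ j : b, ∑ j' : b, C j j' • (V * Matrix.single j j' 1 * star V) :=
          Finset.sum_congr rfl fun j _ => Finset.sum_congr rfl fun j' _ => e1 j j'
  have reduce : ∀ (L R : Matrix b b ℂ →ₗ[ℂ] Matrix a a ℂ),
      (∀ j j' : b, L (V * Matrix.single j j' 1 * star V) = R (V * Matrix.single j j' 1 * star V)) →
      ∀ B : Matrix b b ℂ, L B = R B := by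
    intro L R h B
    have hB : B = V * (star V * B * V) * star V := (cancelV B).symm
    rw [hB, expand (star V * B * V), map_sum, map_sum]
    refine Finset.sum_congr rfl fun j _ => ?_
    rw [map_sum, map_sum]
    refine Finset.sum_congr rfl fun j' _ => ?_
    rw [LinearMap.map_smul, LinearMap.map_smul, h j j']
  -- sigma action on basis elements
  have hσE : ∀ (j j' : b), σ * (V * Matrix.single j j' 1 * star V)
      = (mu j : ℂ) • (V * Matrix.single j j' 1 * star V) := by
    intro j j'
    conv_lhs => rw [hσspec]
    calc (V * Dm * star V) * (V * Matrix.single j j' 1 * star V)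
        = V * (Dm * ((star V * V) * Matrix.single j j' 1)) * star V := by noncomm_ring
      _ = V * (Dm * Matrix.single j j' 1) * star V := by rw [hV1, one_mul]
      _ = (mu j : ℂ) • (V * Matrix.single j j' 1 * star V) := by
          rw [hDm, dmulL, mul_smul_comm, smul_mul_assoc]
  have hEσ : ∀ (j j' : b), (V * Matrix.single j j' 1 * star V) * σ
      = (mu j' : ℂ) • (V * Matrix.single j j' 1 * star V) := by
    intro j j'
    conv_lhs => rw [hσspec]
    calc (V * Matrix.single j j' 1 * star V) * (V * Dm * star V)
        = V * (Matrix.single j j' 1 * ((star V * V) * Dm)) * star V := by noncomm_ring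
      _ = V * (Matrix.single j j' 1 * Dm) * star V := by rw [hV1, one_mul]
      _ = (mu j' : ℂ) • (V * Matrix.single j j' 1 * star V) := by
          rw [hDm, dmulR, mul_smul_comm, smul_mul_assoc]
  -- rho conjugation
  have hMρ : ∀ M : Matrix a a ℂ, star U * (M * ρ) * U = (star U * M * U) * Dl := by
    intro M
    conv_lhs => rw [hρspec]
    calc star U * (M * (U * Dl * star U)) * U
        = (star U * M * U) * Dl * (star U * U) := by noncomm_ring
      _ = (star U * M * U) * Dl := by rw [hU1, mul_one]
  have hρM : ∀ M : Matrix a a ℂ, star U * (ρ * M) * U = Dl * (star U * M * U) := by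
    intro M
    conv_lhs => rw [hρspec]
    calc star U * ((U * Dl * star U) * M) * U
        = (star U * U) * Dl * (star U * M * U) := by noncomm_ring
      _ = Dl * (star U * M * U) := by rw [hU1, one_mul]
  -- imagPow formulas
  have hImρ : ∀ t : ℝ, imagPow hρ t
      = U * Matrix.diagonal (fun i => Complex.exp (Complex.I * t * Real.log (lam i))) * star U := by
    intro t
    rw [imagPow_eq hρ t]
  have hImσ : ∀ t : ℝ, imagPow hσ t
      = V * Matrix.diagonal (fun j => Complex.exp (Complex.I * t * Real.log (mu j))) * star V := by
    intro t
    rw [imagPow_eq hσ t]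
  have hImE : ∀ (t : ℝ) (j j' : b),
      imagPow hσ t * (V * Matrix.single j j' 1 * star V) * imagPow hσ (-t)
      = Complex.exp (Complex.I * t * ((Real.log (mu j) - Real.log (mu j') : ℝ) : ℂ))
          • (V * Matrix.single j j' 1 * star V) := by
    intro t j j'
    rw [hImσ t, hImσ (-t)]
    set c1 : b → ℂ := fun j => Complex.exp (Complex.I * t * Real.log (mu j)) with hc1
    set c2 : b → ℂ := fun j => Complex.exp (Complex.I * (-t : ℝ) * Real.log (mu j)) with hc2
    have inner : Matrix.diagonal c1 * Matrix.single j j' 1 * Matrix.diagonal c2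
        = (c1 j * c2 j') • Matrix.single j j' 1 := by
      rw [dmulL, smul_mul_assoc, dmulR, smul_smul]
    have coef : c1 j * c2 j'
        = Complex.exp (Complex.I * t * ((Real.log (mu j) - Real.log (mu j') : ℝ) : ℂ)) := by
      rw [hc1, hc2]
      simp only []
      rw [← Complex.exp_add]
      congr 1
      push_cast
      ring
    calc (V * Matrix.diagonal c1 * star V) * (V * Matrix.single j j' 1 * star V)
            * (V * Matrix.diagonal c2 * star V)
        = V * (Matrix.diagonal c1 * ((star V * V) * (Matrix.single j j' 1
            * ((star V * V) * Matrix.diagonal c2)))) * star V := by noncomm_ring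
      _ = V * (Matrix.diagonal c1 * Matrix.single j j' 1 * Matrix.diagonal c2) * star V := by
          rw [hV1]; noncomm_ring
      _ = V * ((c1 j * c2 j') • Matrix.single j j' 1) * star V := by rw [inner]
      _ = (c1 j * c2 j') • (V * Matrix.single j j' 1 * star V) := by
          rw [mul_smul_comm, smul_mul_assoc]
      _ = _ := by rw [coef]
  have hImM : ∀ (t : ℝ) (M : Matrix a a ℂ),
      star U * (imagPow hρ t * M * imagPow hρ (-t)) * U
        = Matrix.diagonal (fun i => Complex.exp (Complex.I * t * Real.log (lam i)))
            * (star U * M * U)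
            * Matrix.diagonal (fun i => Complex.exp (Complex.I * (-t : ℝ) * Real.log (lam i))) := by
    intro t M
    rw [hImρ t, hImρ (-t)]
    calc star U * ((U * Matrix.diagonal (fun i => Complex.exp (Complex.I * t * Real.log (lam i))) * star U) * M
            * (U * Matrix.diagonal (fun i => Complex.exp (Complex.I * (-t : ℝ) * Real.log (lam i))) * star U)) * U
        = (star U * U) * Matrix.diagonal (fun i => Complex.exp (Complex.I * t * Real.log (lam i)))
            * (star U * M * U)
            * Matrix.diagonal (fun i => Complex.exp (Complex.I * (-t : ℝ) * Real.log (lam i))) * (star U * U) := by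
          noncomm_ring
      _ = _ := by rw [hU1]; noncomm_ring
  -- the core condition
  have prodpos : ∀ (j : b) (i : a), (0:ℝ) < mu j * lam i := fun j i => mul_pos (hmu0 j) (hlam0 i)
  -- A ↔ C
  have hAC : (∀ B, g (σ * B) * ρ = ρ * g (B * σ)) ↔
      (∀ (j j' : b) (i i' : a),
        (star U * g (V * Matrix.single j j' 1 * star V) * U) i i' = 0
          ∨ mu j * lam i' = lam i * mu j') := by
    constructor
    · intro ha j j' i i'
      by_cases hz : (star U * g (V * Matrix.single j j' 1 * star V) * U) i i' = 0
      · exact Or.inl hz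
      right
      have h1 := ha (V * Matrix.single j j' 1 * star V)
      rw [hσE j j', hEσ j j', LinearMap.map_smul, LinearMap.map_smul, smul_mul_assoc, mul_smul_comm] at h1
      have h2 := congrArg (fun Z => star U * Z * U) h1
      simp only [Matrix.mul_smul, Matrix.smul_mul] at h2
      rw [hMρ, hρM] at h2
      have h4 : ((mu j : ℂ) • ((star U * g (V * Matrix.single j j' 1 * star V) * U) * Dl)) i i'
          = ((mu j' : ℂ) • (Dl * (star U * g (V * Matrix.single j j' 1 * star V) * U))) i i' := by
        rw [h2]
      rw [Matrix.smul_apply, Matrix.smul_apply, Matrix.mul_diagonal, Matrix.diagonal_mul,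
        smul_eq_mul, smul_eq_mul] at h4
      have h5 : ((mu j : ℂ) * (lam i' : ℂ)) * ((star U * g (V * Matrix.single j j' 1 * star V) * U) i i')
          = ((lam i : ℂ) * (mu j' : ℂ)) * ((star U * g (V * Matrix.single j j' 1 * star V) * U) i i') := by
        linear_combination h4
      have h6 := mul_right_cancel₀ hz h5
      exact_mod_cast h6
    · intro hc
      set La : Matrix b b ℂ →ₗ[ℂ] Matrix a a ℂ :=
        (LinearMap.mulRight ℂ ρ).comp (g.comp (LinearMap.mulLeft ℂ σ)) with hLa
      set Ra : Matrix b b ℂ →ₗ[ℂ] Matrix a a ℂ :=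
        (LinearMap.mulLeft ℂ ρ).comp (g.comp (LinearMap.mulRight ℂ σ)) with hRa
      have happ : ∀ B, La B = g (σ * B) * ρ := fun B => rfl
      have happ' : ∀ B, Ra B = ρ * g (B * σ) := fun B => rfl
      intro B
      rw [← happ, ← happ']
      refine reduce La Ra (fun j j' => ?_) B
      rw [happ, happ', hσE j j', hEσ j j', LinearMap.map_smul, LinearMap.map_smul, smul_mul_assoc, mul_smul_comm]
      apply conjU_inj
      simp only [Matrix.mul_smul, Matrix.smul_mul]
      rw [hMρ, hρM]
      ext i i'
      rw [Matrix.smul_apply, Matrix.smul_apply, Matrix.mul_diagonal, Matrix.diagonal_mul,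
        smul_eq_mul, smul_eq_mul]
      rcases hc j j' i i' with h0 | heq
      · rw [h0]; ring
      · have heqC : (mu j : ℂ) * (lam i' : ℂ) = (lam i : ℂ) * (mu j' : ℂ) := by
          exact_mod_cast heq
        linear_combination ((star U * g (V * Matrix.single j j' 1 * star V) * U) i i') * heqC
  -- B ↔ C
  have hBC : (∀ B (t : ℝ), g (imagPow hσ t * B * imagPow hσ (-t))
        = imagPow hρ t * g B * imagPow hρ (-t)) ↔
      (∀ (j j' : b) (i i' : a),
        (star U * g (V * Matrix.single j j' 1 * star V) * U) i i' = 0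
          ∨ mu j * lam i' = lam i * mu j') := by
    constructor
    · intro hb j j' i i'
      by_cases hz : (star U * g (V * Matrix.single j j' 1 * star V) * U) i i' = 0
      · exact Or.inl hz
      right
      have hexp : ∀ t : ℝ,
          Complex.exp (Complex.I * t * ((Real.log (mu j) - Real.log (mu j') : ℝ) : ℂ))
            = Complex.exp (Complex.I * t * ((Real.log (lam i) - Real.log (lam i') : ℝ) : ℂ)) := by
        intro t
        have h1 := hb (V * Matrix.single j j' 1 * star V) t
        rw [hImE t j j', LinearMap.map_smul] at h1
        have h2 := congrArg (fun Z => star U * Z * U) h1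
        simp only [Matrix.mul_smul, Matrix.smul_mul] at h2
        rw [hImM t] at h2
        have h4 := congrFun (congrFun (congrArg (fun (M : Matrix a a ℂ) (i : a) (i' : a) => M i i') h2) i) i'
        simp only [Matrix.smul_apply, Matrix.mul_diagonal, Matrix.diagonal_mul, smul_eq_mul] at h4
        have h5 : Complex.exp (Complex.I * t * ((Real.log (mu j) - Real.log (mu j') : ℝ) : ℂ))
              * ((star U * g (V * Matrix.single j j' 1 * star V) * U) i i')
            = Complex.exp (Complex.I * t * ((Real.log (lam i) - Real.log (lam i') : ℝ) : ℂ))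
              * ((star U * g (V * Matrix.single j j' 1 * star V) * U) i i') := by
          have hcomb : Complex.exp (Complex.I * t * Real.log (lam i))
                * Complex.exp (Complex.I * (-t : ℝ) * Real.log (lam i'))
              = Complex.exp (Complex.I * t * ((Real.log (lam i) - Real.log (lam i') : ℝ) : ℂ)) := by
            rw [← Complex.exp_add]
            congr 1
            push_cast
            ring
          calc Complex.exp (Complex.I * t * ((Real.log (mu j) - Real.log (mu j') : ℝ) : ℂ))
                  * ((star U * g (V * Matrix.single j j' 1 * star V) * U) i i')
              = Complex.exp (Complex.I * t * Real.log (lam i))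
                  * ((star U * g (V * Matrix.single j j' 1 * star V) * U) i i')
                  * Complex.exp (Complex.I * (-t : ℝ) * Real.log (lam i')) := h4
            _ = _ := by rw [← hcomb]; ring
        exact mul_right_cancel₀ hz h5
      have hlog := exp_param_inj hexp
      have hlogmul : Real.log (mu j * lam i') = Real.log (lam i * mu j') := by
        rw [Real.log_mul (ne_of_gt (hmu0 j)) (ne_of_gt (hlam0 i')),
          Real.log_mul (ne_of_gt (hlam0 i)) (ne_of_gt (hmu0 j'))]
        linarith
      have := congrArg Real.exp hlogmul
      rwa [Real.exp_log (prodpos j i'), Real.exp_log (mul_pos (hlam0 i) (hmu0 j'))] at this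
    · intro hc B t
      set Lb : Matrix b b ℂ →ₗ[ℂ] Matrix a a ℂ :=
        g.comp ((LinearMap.mulRight ℂ (imagPow hσ (-t))).comp (LinearMap.mulLeft ℂ (imagPow hσ t))) with hLb
      set Rb : Matrix b b ℂ →ₗ[ℂ] Matrix a a ℂ :=
        (LinearMap.mulLeft ℂ (imagPow hρ t)).comp ((LinearMap.mulRight ℂ (imagPow hρ (-t))).comp g) with hRb
      have happ : ∀ B, Lb B = g (imagPow hσ t * B * imagPow hσ (-t)) := fun B => rfl
      have happ' : ∀ B, Rb B = imagPow hρ t * g B * imagPow hρ (-t) := fun B => (mul_assoc _ _ _).symm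
      rw [← happ, ← happ']
      refine reduce Lb Rb (fun j j' => ?_) B
      rw [happ, happ', hImE t j j', LinearMap.map_smul]
      apply conjU_inj
      simp only [Matrix.mul_smul, Matrix.smul_mul]
      rw [hImM t]
      ext i i'
      simp only [Matrix.smul_apply, Matrix.mul_diagonal, Matrix.diagonal_mul, smul_eq_mul]
      rcases hc j j' i i' with h0 | heq
      · rw [h0]; ring
      · have hlogeq : Real.log (mu j) - Real.log (mu j') = Real.log (lam i) - Real.log (lam i') := by
          have := congrArg Real.log heq
          rw [Real.log_mul (ne_of_gt (hmu0 j)) (ne_of_gt (hlam0 i')),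
            Real.log_mul (ne_of_gt (hlam0 i)) (ne_of_gt (hmu0 j'))] at this
          linarith
        have hcomb : Complex.exp (Complex.I * t * Real.log (lam i))
              * Complex.exp (Complex.I * (-t : ℝ) * Real.log (lam i'))
            = Complex.exp (Complex.I * t * ((Real.log (lam i) - Real.log (lam i') : ℝ) : ℂ)) := by
          rw [← Complex.exp_add]
          congr 1
          push_cast
          ring
        rw [hlogeq]
        rw [← hcomb]
        ring
  rw [hAC, hBC]

/-- For a unital blockwise-CP map `F` between multi-matrix algebras and
faithful states `ω = Σ_x p_x tr(ρ_x ·)` on the codomain pulling back to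
`Σ_y q_y tr(σ_y ·)`, the blockwise condition `F_{xy}(σ_y B)ρ_x = ρ_x F_{xy}(B σ_y)` holds
iff `F` intertwines the modular groups blockwise:
`F_{xy}(σ_y^{it} B σ_y^{-it}) = ρ_x^{it} F_{xy}(B) ρ_x^{-it}`. -/
theorem stmt_9 {X Y : Type*} [Fintype X] [Fintype Y] [DecidableEq X] [DecidableEq Y]
    [Nonempty X] [Nonempty Y]
    (m : X → ℕ) (n : Y → ℕ) (hm : ∀ x, 0 < m x) (hn : ∀ y, 0 < n y)
    (F : ((y : Y) → Matrix (Fin (n y)) (Fin (n y)) ℂ) →ₗ[ℂ]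
         ((x : X) → Matrix (Fin (m x)) (Fin (m x)) ℂ))
    (hFunital : F 1 = 1)
    (hFcp : ∀ (x : X) (y : Y), IsCP (fun B => F (Pi.single y B) x))
    (p : X → ℝ) (hp : ∀ x, 0 < p x) (hpsum : ∑ x, p x = 1)
    (ρ : (x : X) → Matrix (Fin (m x)) (Fin (m x)) ℂ)
    (hρ : ∀ x, (ρ x).PosDef) (hρtr : ∀ x, (ρ x).trace = 1)
    (q : Y → ℝ) (hq : ∀ y, 0 < q y) (hqsum : ∑ y, q y = 1)
    (σ : (y : Y) → Matrix (Fin (n y)) (Fin (n y)) ℂ)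
    (hσd : ∀ y, (σ y).PosDef) (hσtr : ∀ y, (σ y).trace = 1)
    (hpull : ∀ B : (y : Y) → Matrix (Fin (n y)) (Fin (n y)) ℂ,
      ∑ x, (p x : ℂ) * (ρ x * F B x).trace = ∑ y, (q y : ℂ) * (σ y * B y).trace) :
    (∀ (x : X) (y : Y) (B : Matrix (Fin (n y)) (Fin (n y)) ℂ),
        F (Pi.single y (σ y * B)) x * ρ x = ρ x * F (Pi.single y (B * σ y)) x) ↔
    (∀ (x : X) (y : Y) (B : Matrix (Fin (n y)) (Fin (n y)) ℂ) (t : ℝ),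
        F (Pi.single y (imagPow (hσd y) t * B * imagPow (hσd y) (-t))) x
          = imagPow (hρ x) t * F (Pi.single y B) x * imagPow (hρ x) (-t)) := by
  
  have hkey : ∀ (x : X) (y : Y),
      (∀ B, F (Pi.single y (σ y * B)) x * ρ x = ρ x * F (Pi.single y (B * σ y)) x) ↔
      (∀ B (t : ℝ), F (Pi.single y (imagPow (hσd y) t * B * imagPow (hσd y) (-t))) x
          = imagPow (hρ x) t * F (Pi.single y B) x * imagPow (hρ x) (-t)) := by
    intro x y
    exact key_iff ((LinearMap.proj x).comp
      (F.comp (LinearMap.single ℂ (fun y => Matrix (Fin (n y)) (Fin (n y)) ℂ) y)))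
      (hρ x) (hσd y)
  constructor
  · intro h x y B t
    exact (hkey x y).mp (fun B => h x y B) B t
  · intro h x y B
    exact (hkey x y).mpr (fun B t => h x y B t) B
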